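/- Let H: ℝ^r ⇉ ℝ^r be a convex process, λ ∈ [0,1), and suppose x ∈ (H − λI)^{-k}(0) for some k ≥ 1, witnessed by a sequence x_0 = x, x_1, …, with x_{j+1} ∈ H(x_j) − λx_j and x_j = 0 for j ≥ k. Then the sequence z_j = Σ_{i=max{0,j−k}}^{j} C(j,i) λ^i x_{j−i} is a solution of z_{j+1} ∈ H(z_j) starting from x and converging to zero. -/
import Mathlib


/-- Discrete-time analogue of Smirnov's Lemma 8.3: if `λ ∈ [0,1)` and
`x ∈ (H − λI)^{-k}(0)`, witnessed by a sequence with `x_{j+1} ∈ H(x_j) − λ x_j`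
and `x_j = 0` for `j ≥ k`, then `z_j = ∑_{i=max{0,j−k}}^{j} C(j,i) λ^i x_{j−i}` is a
solution of `z_{j+1} ∈ H(z_j)` starting from `x_0` and converging to zero. -/
theorem stmt8 {r : ℕ} (H : EuclideanSpace ℝ (Fin r) → Set (EuclideanSpace ℝ (Fin r)))
    (hconv : Convex ℝ {p : EuclideanSpace ℝ (Fin r) × EuclideanSpace ℝ (Fin r) | p.2 ∈ H p.1})
    (hcone : ∀ c : ℝ, 0 ≤ c → ∀ x y, y ∈ H x → c • y ∈ H (c • x))
    (lam : ℝ) (hlam0 : 0 ≤ lam) (hlam1 : lam < 1)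
    (k : ℕ) (hk : 1 ≤ k) (x : ℕ → EuclideanSpace ℝ (Fin r))
    (hstep : ∀ j, x (j + 1) + lam • x j ∈ H (x j))
    (hzero : ∀ j, k ≤ j → x j = 0) :
    (fun j => ∑ i ∈ Finset.Icc (j - k) j, ((j.choose i : ℝ) * lam ^ i) • x (j - i)) 0 = x 0 ∧
    (∀ j, (fun j => ∑ i ∈ Finset.Icc (j - k) j, ((j.choose i : ℝ) * lam ^ i) • x (j - i)) (j + 1)
        ∈ H ((fun j => ∑ i ∈ Finset.Icc (j - k) j, ((j.choose i : ℝ) * lam ^ i) • x (j - i)) j)) ∧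
    Filter.Tendsto
      (fun j => ∑ i ∈ Finset.Icc (j - k) j, ((j.choose i : ℝ) * lam ^ i) • x (j - i))
      Filter.atTop (nhds 0) := by
  classical
  -- The graph contains 0 and is closed under addition
  have h0 : (0 : EuclideanSpace ℝ (Fin r)) ∈ H 0 := by
    have := hcone 0 le_rfl (x 0) (x 1 + lam • x 0) (hstep 0)
    simpa using this
  have hadd : ∀ a b ya yb : EuclideanSpace ℝ (Fin r), ya ∈ H a → yb ∈ H b → ya + yb ∈ H (a + b) := by
    intro a b ya yb ha hb
    have hmid := hconv (x := (a, ya)) (y := (b, yb)) ha hb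
      (by norm_num : (0:ℝ) ≤ 1/2) (by norm_num : (0:ℝ) ≤ 1/2) (by norm_num)
    simp only [Set.mem_setOf_eq, Prod.smul_fst, Prod.smul_snd, Prod.fst_add, Prod.snd_add]
      at hmid
    have h2 := hcone 2 (by norm_num) _ _ hmid
    simp only [smul_add, smul_smul] at h2
    norm_num at h2
    exact h2
  -- Closure under nonnegative combinations
  have hsum : ∀ (s : Finset ℕ) (c : ℕ → ℝ) (a b : ℕ → EuclideanSpace ℝ (Fin r)),
      (∀ i ∈ s, 0 ≤ c i) → (∀ i ∈ s, b i ∈ H (a i)) →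
      (∑ i ∈ s, c i • b i) ∈ H (∑ i ∈ s, c i • a i) := by
    intro s
    induction s using Finset.induction_on with
    | empty => intro c a b _ _; simpa using h0
    | @insert i s hi ih =>
        intro c a b hc hb
        rw [Finset.sum_insert hi, Finset.sum_insert hi]
        exact hadd _ _ _ _
          (hcone _ (hc _ (Finset.mem_insert_self _ _)) _ _ (hb _ (Finset.mem_insert_self _ _)))
          (ih c a b (fun i hi => hc i (Finset.mem_insert_of_mem hi))
            (fun i hi => hb i (Finset.mem_insert_of_mem hi)))
  set z : ℕ → EuclideanSpace ℝ (Fin r) :=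
    fun j => ∑ i ∈ Finset.Icc (j - k) j, ((j.choose i : ℝ) * lam ^ i) • x (j - i) with hz
  -- the truncated sum equals the full sum
  have eq1 : ∀ j, z j = ∑ i ∈ Finset.range (j + 1), ((j.choose i : ℝ) * lam ^ i) • x (j - i) := by
    intro j
    rw [hz]
    refine Finset.sum_subset ?_ ?_
    · intro i hi
      simp only [Finset.mem_Icc, Finset.mem_range] at *
      omega
    · intro i hi hni
      simp only [Finset.mem_Icc, Finset.mem_range] at hi hni
      have : x (j - i) = 0 := hzero _ (by omega)
      rw [this, smul_zero]
  -- the key algebraic identity, via Pascal's rule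
  have key : ∀ j, ∑ i ∈ Finset.range (j + 1),
      ((j.choose i : ℝ) * lam ^ i) • (x (j - i + 1) + lam • x (j - i))
      = ∑ i ∈ Finset.range (j + 2), (((j + 1).choose i : ℝ) * lam ^ i) • x (j + 1 - i) := by
    intro j
    rw [Finset.sum_range_succ' (fun i => (((j + 1).choose i : ℝ) * lam ^ i) • x (j + 1 - i)) (j+1)]
    have hR : ∀ i ∈ Finset.range (j + 1),
        (((j + 1).choose (i + 1) : ℝ) * lam ^ (i + 1)) • x (j + 1 - (i + 1))
        = ((j.choose i : ℝ) * lam ^ (i + 1)) • x (j - i)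
          + ((j.choose (i + 1) : ℝ) * lam ^ (i + 1)) • x (j - i) := by
      intro i hi
      have : j + 1 - (i + 1) = j - i := by omega
      rw [this, Nat.choose_succ_succ, ← add_smul]
      congr 1
      push_cast
      ring
    rw [Finset.sum_congr rfl hR, Finset.sum_add_distrib]
    have hL : ∀ i ∈ Finset.range (j + 1),
        ((j.choose i : ℝ) * lam ^ i) • (x (j - i + 1) + lam • x (j - i))
        = ((j.choose i : ℝ) * lam ^ i) • x (j - i + 1)
          + ((j.choose i : ℝ) * lam ^ (i + 1)) • x (j - i) := by
      intro i hi
      rw [smul_add, smul_smul]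
      ring_nf
    rw [Finset.sum_congr rfl hL, Finset.sum_add_distrib]
    -- now handle ∑ (C(j,i) λ^i) • x(j-i+1)
    have hA : ∑ i ∈ Finset.range (j + 1), ((j.choose i : ℝ) * lam ^ i) • x (j - i + 1)
        = (∑ i ∈ Finset.range j, ((j.choose (i + 1) : ℝ) * lam ^ (i + 1)) • x (j - i))
          + x (j + 1) := by
      rw [Finset.sum_range_succ' (fun i => ((j.choose i : ℝ) * lam ^ i) • x (j - i + 1)) j]
      congr 1
      · refine Finset.sum_congr rfl ?_
        intro i hi
        simp only [Finset.mem_range] at hi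
        have : j - (i + 1) + 1 = j - i := by omega
        rw [this]
      · simp
    have hB : ∑ i ∈ Finset.range (j + 1), ((j.choose (i + 1) : ℝ) * lam ^ (i + 1)) • x (j - i)
        = ∑ i ∈ Finset.range j, ((j.choose (i + 1) : ℝ) * lam ^ (i + 1)) • x (j - i) := by
      rw [Finset.sum_range_succ]
      simp [Nat.choose_succ_self]
    have hC : (((j + 1).choose 0 : ℝ) * lam ^ 0) • x (j + 1 - 0) = x (j + 1) := by simp
    rw [hA, hB, hC]
    abel
  refine ⟨?_, ?_, ?_⟩
  · simp [hz]
  · intro j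
    show z (j + 1) ∈ H (z j)
    rw [eq1, eq1, ← key j]
    exact hsum (Finset.range (j + 1)) (fun i => (j.choose i : ℝ) * lam ^ i)
      (fun i => x (j - i)) (fun i => x (j - i + 1) + lam • x (j - i))
      (fun i _ => by positivity) (fun i _ => hstep (j - i))
  · -- convergence
    show Filter.Tendsto z Filter.atTop (nhds 0)
    -- eventual reindexed form
    have heq : ∀ j, k ≤ j →
        z j = ∑ m ∈ Finset.range k, ((j.choose (j - m) : ℝ) * lam ^ (j - m)) • x m := by
      intro j hj
      rw [eq1]
      rw [← Finset.sum_range_reflect (fun i => ((j.choose i : ℝ) * lam ^ i) • x (j - i)) (j + 1)]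
      have hre : ∀ m ∈ Finset.range (j + 1),
          ((j.choose (j + 1 - 1 - m) : ℝ) * lam ^ (j + 1 - 1 - m)) • x (j - (j + 1 - 1 - m))
          = ((j.choose (j - m) : ℝ) * lam ^ (j - m)) • x m := by
        intro m hm
        simp only [Finset.mem_range] at hm
        have h1 : j + 1 - 1 - m = j - m := by omega
        have h2 : j - (j - m) = m := by omega
        rw [h1, h2]
      rw [Finset.sum_congr rfl hre]
      refine (Finset.sum_subset ?_ ?_).symm
      · intro m hm
        simp only [Finset.mem_range] at *
        omega
      · intro m hm hnm
        simp only [Finset.mem_range] at hm hnm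
        rw [hzero m (by omega), smul_zero]
    -- each coefficient tends to 0
    have hcoef : ∀ m, m < k →
        Filter.Tendsto (fun j : ℕ => (j.choose (j - m) : ℝ) * lam ^ (j - m))
          Filter.atTop (nhds 0) := by
      intro m hm
      rcases eq_or_lt_of_le hlam0 with h0' | hpos
      · apply Filter.Tendsto.congr' _ tendsto_const_nhds
        filter_upwards [Filter.eventually_ge_atTop (m + 1)] with j hj
        rw [← h0', zero_pow (by omega : j - m ≠ 0), mul_zero]
      · have hlim : Filter.Tendsto
            (fun j : ℕ => ((j : ℝ) ^ m * lam ^ j) * (lam ^ m)⁻¹)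
            Filter.atTop (nhds 0) := by
          have := (tendsto_pow_const_mul_const_pow_of_lt_one m hlam0 hlam1).mul_const
            ((lam ^ m)⁻¹)
          simpa using this
        refine squeeze_zero' ?_ ?_ hlim
        · filter_upwards with j
          positivity
        · filter_upwards [Filter.eventually_ge_atTop m] with j hj
          have hch : (j.choose (j - m) : ℝ) ≤ (j : ℝ) ^ m := by
            rw [Nat.choose_symm hj]
            exact_mod_cast Nat.choose_le_pow j m
          have hpow : lam ^ (j - m) = lam ^ j * (lam ^ m)⁻¹ := by
            rw [← pow_sub₀ _ (ne_of_gt hpos) hj]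
          rw [hpow, ← mul_assoc]
          have h1 : (0:ℝ) ≤ lam ^ j := by positivity
          have h2 : (0:ℝ) ≤ (lam ^ m)⁻¹ := by positivity
          gcongr
    have hlim2 : Filter.Tendsto
        (fun j : ℕ => ∑ m ∈ Finset.range k, ((j.choose (j - m) : ℝ) * lam ^ (j - m)) • x m)
        Filter.atTop (nhds 0) := by
      have : Filter.Tendsto
          (fun j : ℕ => ∑ m ∈ Finset.range k, ((j.choose (j - m) : ℝ) * lam ^ (j - m)) • x m)
          Filter.atTop (nhds (∑ m ∈ Finset.range k, (0 : EuclideanSpace ℝ (Fin r)))) := by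
        refine tendsto_finset_sum _ ?_
        intro m hm
        simp only [Finset.mem_range] at hm
        simpa using (hcoef m hm).smul_const (x m)
      simpa using this
    refine Filter.Tendsto.congr' ?_ hlim2
    filter_upwards [Filter.eventually_ge_atTop k] with j hj
    exact (heq j hj).symm
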